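/- Let p, q be relatively prime positive integers and let A(t), B(t) be polynomials with nonnegative rational coefficients satisfying A(t)·ξ_q(t) = B(t)·ξ_p(t). Then there exist finitely many order ideals T_k contained in R(p,q) = {(x,y) ∈ ℕ² : px + qy < (p-1)(q-1)}, nonnegative rationals γ_k, and integers c_k ≥ 0, such that A(t) = Σ_k γ_k t^{c_k} A_{T_k}(t) and B(t) = Σ_k γ_k t^{c_k} B_{T_k}(t). -/
import Mathlib


open Polynomial

noncomputable def xiQ (d : ℕ) : Polynomial ℚ := ∑ k ∈ Finset.range d, X ^ k

def IsOrderIdeal (T : Finset (ℕ × ℕ)) : Prop :=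
  ∀ a ∈ T, ∀ b : ℕ × ℕ, b.1 ≤ a.1 → b.2 ≤ a.2 → b ∈ T

def lamb (T : Finset (ℕ × ℕ)) (j : ℕ) : ℕ :=
  (T.filter fun z => z.2 = j).sup fun z => z.1 + 1

def mub (T : Finset (ℕ × ℕ)) (i : ℕ) : ℕ :=
  (T.filter fun z => z.1 = i).sup fun z => z.2 + 1

noncomputable def ATQ (p q : ℕ) (T : Finset (ℕ × ℕ)) : Polynomial ℚ :=
  ∑ a ∈ Finset.range p, X ^ (a * q - p * lamb T (p - 1 - a))

noncomputable def BTQ (p q : ℕ) (T : Finset (ℕ × ℕ)) : Polynomial ℚ :=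
  ∑ a ∈ Finset.range q, X ^ (a * p - q * mub T (q - 1 - a))

lemma xiQ_eval_one (d : ℕ) : (xiQ d).eval 1 = d := by
  simp [xiQ]

lemma xiQ_ne_zero {d : ℕ} (hd : 0 < d) : xiQ d ≠ 0 := by
  intro h
  have := xiQ_eval_one d
  rw [h] at this
  simp at this
  have : (d:ℚ) ≠ 0 := Nat.cast_ne_zero.mpr hd.ne'
  simp_all

lemma xiQ_coprime {p q : ℕ} (hp : 0 < p) (hq : 0 < q) (hpq : Nat.Coprime p q) :
    IsCoprime (xiQ p) (xiQ q) := by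
  rw [← Polynomial.isCoprime_map (algebraMap ℚ ℂ)]
  by_contra hc
  set f := (xiQ p).map (algebraMap ℚ ℂ)
  set g := (xiQ q).map (algebraMap ℚ ℂ)
  have hf : f ≠ 0 := by
    simp only [f, Polynomial.map_ne_zero_iff (algebraMap ℚ ℂ).injective]
    exact xiQ_ne_zero hp
  have hgcd : ¬ IsUnit (EuclideanDomain.gcd f g) := fun hu =>
    hc (EuclideanDomain.gcd_isUnit_iff.mp hu)
  -- gcd nonzero
  have hgne : EuclideanDomain.gcd f g ≠ 0 := by
    intro h0
    exact hf ((EuclideanDomain.gcd_eq_zero_iff).mp h0).1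
  have hdeg : (EuclideanDomain.gcd f g).degree ≠ 0 := by
    intro h0
    exact hgcd (Polynomial.isUnit_iff_degree_eq_zero.mpr h0)
  obtain ⟨z, hz⟩ := Complex.isAlgClosed.exists_root _ hdeg
  have hzf : f.eval z = 0 := by
    have := EuclideanDomain.gcd_dvd_left f g
    obtain ⟨u, hu⟩ := this
    rw [hu, eval_mul, (Polynomial.IsRoot.def).mp hz, zero_mul]
  have hzg : g.eval z = 0 := by
    have := EuclideanDomain.gcd_dvd_right f g
    obtain ⟨u, hu⟩ := this
    rw [hu, eval_mul, (Polynomial.IsRoot.def).mp hz, zero_mul]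
  -- translate to power sums
  have hfz : ∑ k ∈ Finset.range p, z ^ k = 0 := by
    have : f.eval z = ∑ k ∈ Finset.range p, z ^ k := by
      simp [f, xiQ, Polynomial.eval_map, Polynomial.eval₂_finset_sum]
    rwa [this] at hzf
  have hgz : ∑ k ∈ Finset.range q, z ^ k = 0 := by
    have : g.eval z = ∑ k ∈ Finset.range q, z ^ k := by
      simp [g, xiQ, Polynomial.eval_map, Polynomial.eval₂_finset_sum]
    rwa [this] at hzg
  have hzp : z ^ p = 1 := by
    have := geom_sum_mul z p
    rw [hfz, zero_mul] at this
    exact sub_eq_zero.mp this.symm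
  have hzq : z ^ q = 1 := by
    have := geom_sum_mul z q
    rw [hgz, zero_mul] at this
    exact sub_eq_zero.mp this.symm
  have hz0 : z ≠ 0 := by
    intro h0; rw [h0, zero_pow hp.ne'] at hzp; exact zero_ne_one hzp
  have hz1 : z = 1 := by
    have h1 : (z : ℂ) ^ ((p : ℤ) * Nat.gcdA p q + (q : ℤ) * Nat.gcdB p q) = z := by
      rw [← Nat.gcd_eq_gcd_ab p q]
      simp [hpq.gcd_eq_one]
    rw [zpow_add₀ hz0, zpow_mul, zpow_mul] at h1
    rw [show ((p:ℤ)) = ((p:ℕ):ℤ) by rfl, zpow_natCast, show ((q:ℤ)) = ((q:ℕ):ℤ) by rfl, zpow_natCast, hzp, hzq] at h1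
    simpa using h1.symm
  rw [hz1] at hfz
  simp at hfz
  omega

lemma sum_window (f : ℕ → ℚ) (m d : ℕ) :
    ∑ j ∈ Finset.range d, (if j ≤ m then f (m - j) else 0) =
      (∑ k ∈ Finset.range (m + 1), f k) -
        (if d ≤ m then ∑ k ∈ Finset.range (m - d + 1), f k else 0) := by
  induction d with
  | zero => simp
  | succ d ih =>
      rw [Finset.sum_range_succ, ih]
      by_cases h1 : d + 1 ≤ m
      · have h0 : d ≤ m := by omega
        rw [if_pos h0, if_pos h0, if_pos h1]
        have h2 : m - d = (m - (d+1)) + 1 := by omega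
        rw [h2, Finset.sum_range_succ, Finset.sum_range_succ]
        ring
      · by_cases h0 : d ≤ m
        · have hmd : m = d := by omega
          rw [if_pos h0, if_pos h0, if_neg h1]
          subst hmd
          simp
        · rw [if_neg h0, if_neg h0, if_neg h1]
          simp

/-- coefficient of F * xiQ d in terms of partial sums of coefficients of F -/
lemma coeff_mul_xiQ (F : Polynomial ℚ) (d m : ℕ) :
    (F * xiQ d).coeff m =
      (∑ k ∈ Finset.range (m + 1), F.coeff k) -
        (if d ≤ m then ∑ k ∈ Finset.range (m - d + 1), F.coeff k else 0) := by
  rw [← sum_window]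
  rw [xiQ, Finset.mul_sum]
  rw [Polynomial.finset_sum_coeff]
  apply Finset.sum_congr rfl
  intro j _
  exact Polynomial.coeff_mul_X_pow' F j m

lemma res_inj {p q : ℕ} (hp : 0 < p) (hpq : Nat.Coprime p q) :
    ∀ a₁, a₁ < p → ∀ a₂, a₂ < p → a₁ * q % p = a₂ * q % p → a₁ = a₂ := by
  haveI : NeZero p := ⟨hp.ne'⟩
  intro a₁ h₁ a₂ h₂ h
  have hq : IsUnit (q : ZMod p) := (ZMod.isUnit_iff_coprime q p).mpr hpq.symm
  have : ((a₁ * q : ℕ) : ZMod p) = ((a₂ * q : ℕ) : ZMod p) :=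
    (ZMod.natCast_eq_natCast_iff' _ _ _).mpr h
  push_cast at this
  have h3 : ((a₁ : ZMod p)) = a₂ := hq.mul_right_cancel this
  have := congrArg ZMod.val h3
  rwa [ZMod.val_cast_of_lt h₁, ZMod.val_cast_of_lt h₂] at this

lemma res_exists {p q : ℕ} (hp : 0 < p) (hpq : Nat.Coprime p q) (n : ℕ) :
    ∃ a, a < p ∧ a * q % p = n % p := by
  haveI : NeZero p := ⟨hp.ne'⟩
  have hq : IsUnit (q : ZMod p) := (ZMod.isUnit_iff_coprime q p).mpr hpq.symm
  obtain ⟨u, hu⟩ := hq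
  refine ⟨((n : ZMod p) * (↑u⁻¹ : ZMod p)).val, ZMod.val_lt _, ?_⟩
  rw [← ZMod.natCast_eq_natCast_iff']
  push_cast
  rw [ZMod.natCast_val, ZMod.cast_id]
  rw [mul_assoc]
  rw [show ((↑u⁻¹ : ZMod p) * q) = 1 by rw [← hu]; simp]
  rw [mul_one]


open Classical in
noncomputable def indA (p q : ℕ) (T : Finset (ℕ × ℕ)) (c : ℕ) (n : ℕ) : ℚ :=
  if ∃ a, a < p ∧ ∃ j, n = c + (a * q - p * lamb T (p - 1 - a)) + p * j then 1 else 0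

lemma sub_mul_mod' {p l n : ℕ} (h : p * l ≤ n) : (n - p * l) % p = n % p := by
  conv_rhs => rw [← Nat.sub_add_cancel h]
  rw [Nat.add_mul_mod_self_left]

lemma coeff_shift_ATQ {p q : ℕ} (hp : 0 < p) (hpq : Nat.Coprime p q)
    (T : Finset (ℕ × ℕ)) (hT : ∀ a, a < p → p * lamb T (p - 1 - a) ≤ a * q)
    (c m : ℕ) :
    (X ^ c * ATQ p q T).coeff m =
      indA p q T c m - (if p ≤ m then indA p q T c (m - p) else 0) := by
  classical
  set e : ℕ → ℕ := fun a => a * q - p * lamb T (p - 1 - a) with he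
  have hres : ∀ a, a < p → (c + e a) % p = (c + a * q) % p := by
    intro a ha
    rw [Nat.add_mod, Nat.add_mod c (a*q), sub_mul_mod' (hT a ha)]
  have einj : ∀ a₁, a₁ < p → ∀ a₂, a₂ < p → (c + e a₁) % p = (c + e a₂) % p → a₁ = a₂ := by
    intro a₁ h₁ a₂ h₂ h
    rw [hres a₁ h₁, hres a₂ h₂] at h
    have : a₁ * q % p = a₂ * q % p := by
      have := (Nat.ModEq.add_left_cancel' c h)
      exact this
    exact res_inj hp hpq a₁ h₁ a₂ h₂ this
  have hLHS : (X ^ c * ATQ p q T).coeff m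
      = ∑ a ∈ Finset.range p, (if m = c + e a then (1:ℚ) else 0) := by
    rw [ATQ, Finset.mul_sum]
    rw [Polynomial.finset_sum_coeff]
    apply Finset.sum_congr rfl
    intro a _
    rw [← pow_add, Polynomial.coeff_X_pow]
  rw [hLHS]
  by_cases hex : ∃ a, a < p ∧ ∃ j, m = c + e a + p * j
  · obtain ⟨a, ha, j, hj⟩ := hex
    have uniq : ∀ a', a' < p → ∀ j', m = c + e a' + p * j' → a' = a := by
      intro a' ha' j' hj'
      apply einj a' ha' a ha
      have h1 : (c + e a') % p = m % p := by rw [hj', Nat.add_mul_mod_self_left]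
      have h2 : (c + e a) % p = m % p := by rw [hj, Nat.add_mul_mod_self_left]
      rw [h1, h2]
    have hindm : indA p q T c m = 1 := by
      rw [indA, if_pos ⟨a, ha, j, hj⟩]
    rcases Nat.eq_zero_or_pos j with hj0 | hjpos
    · subst hj0
      simp only [mul_zero, add_zero] at hj
      have hsum : ∑ b ∈ Finset.range p, (if m = c + e b then (1:ℚ) else 0) = 1 := by
        rw [Finset.sum_eq_single_of_mem a (Finset.mem_range.mpr ha)]
        · rw [if_pos hj]
        · intro b hb hba
          rw [if_neg]
          intro hmb
          exact hba (uniq b (Finset.mem_range.mp hb) 0 (by simpa using hmb))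
      rw [hsum, hindm]
      have hind2 : (if p ≤ m then indA p q T c (m - p) else 0) = 0 := by
        by_cases hpm : p ≤ m
        · rw [if_pos hpm, indA, if_neg]
          rintro ⟨a', ha', j', hj'⟩
          have hm' : m = c + e a' + p * (j' + 1) := by
            have : m = (m - p) + p := by omega
            rw [this, hj']; ring
          have haa := uniq a' ha' (j' + 1) hm'
          subst haa
          have h6 := hj.symm.trans hm'
          have h7 : 0 = p * (j' + 1) := by omega
          exact absurd h7.symm (Nat.mul_pos hp (Nat.succ_pos j')).ne'
        · rw [if_neg hpm]
      rw [hind2]; ring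
    · have hple : p ≤ m := by
        have : p * 1 ≤ p * j := Nat.mul_le_mul_left p hjpos
        omega
      have hsum : ∑ b ∈ Finset.range p, (if m = c + e b then (1:ℚ) else 0) = 0 := by
        apply Finset.sum_eq_zero
        intro b hb
        rw [if_neg]
        intro hmb
        have hba := uniq b (Finset.mem_range.mp hb) 0 (by simpa using hmb)
        subst hba
        have h6 := hmb.symm.trans hj
        have h7 : 0 = p * j := by omega
        exact absurd h7.symm (Nat.mul_pos hp hjpos).ne'
      have hind2 : indA p q T c (m - p) = 1 := by
        rw [indA, if_pos]
        refine ⟨a, ha, j - 1, ?_⟩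
        have h5 : p * j = p * (j - 1) + p := by
          conv_lhs => rw [show j = (j - 1) + 1 by omega]
          ring
        rw [hj, h5, ← add_assoc, Nat.add_sub_cancel]
      rw [hsum, hindm, if_pos hple, hind2]; ring
  · have hindm : indA p q T c m = 0 := by rw [indA, if_neg hex]
    have hsum : ∑ b ∈ Finset.range p, (if m = c + e b then (1:ℚ) else 0) = 0 := by
      apply Finset.sum_eq_zero
      intro b hb
      rw [if_neg]
      intro hmb
      exact hex ⟨b, Finset.mem_range.mp hb, 0, by omega⟩
    have hind2 : (if p ≤ m then indA p q T c (m - p) else 0) = 0 := by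
      by_cases hpm : p ≤ m
      · rw [if_pos hpm, indA, if_neg]
        rintro ⟨a', ha', j', hj'⟩
        refine hex ⟨a', ha', j' + 1, ?_⟩
        have : m = (m - p) + p := by omega
        rw [this, hj']; ring
      · rw [if_neg hpm]
    rw [hsum, hindm, hind2]; ring

lemma cellbound {p q a x : ℕ} (hp : 0 < p) (hq : 0 < q) (ha : a < p) :
    (p * x + q * (p - 1 - a) + 1 ≤ (p - 1) * (q - 1)) ↔ p * (x + 1) ≤ a * q := by
  have h1 : (1:ℤ) ≤ p := by exact_mod_cast hp
  have h2 : (1:ℤ) ≤ q := by exact_mod_cast hq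
  have h3 : a ≤ p - 1 := by omega
  zify [h3, hp, hq]
  push_cast [Nat.cast_sub h3, Nat.cast_sub hp, Nat.cast_sub hq]
  constructor <;> intro h <;> nlinarith

lemma cellmirror {p q a x : ℕ} (hp : 0 < p) (hq : 0 < q) (ha : a < p)
    (h : p * (x + 1) ≤ a * q) :
    (p - 1) * (q - 1) - 1 - (p * x + q * (p - 1 - a)) = a * q - p * (x + 1) := by
  have hb : p * x + q * (p - 1 - a) + 1 ≤ (p - 1) * (q - 1) :=
    (cellbound hp hq ha).mpr h
  have h3 : a ≤ p - 1 := by omega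
  have h4 : p * x + q * (p - 1 - a) ≤ (p-1)*(q-1) - 1 := by omega
  have h5 : 1 ≤ (p-1)*(q-1) := by omega
  zify [h3, h4, h5, h, hp, hq]
  push_cast [Nat.cast_sub h3, Nat.cast_sub hp, Nat.cast_sub hq]
  ring


open Classical in
noncomputable def indB (p q : ℕ) (T : Finset (ℕ × ℕ)) (c : ℕ) (n : ℕ) : ℚ :=
  if ∃ b, b < q ∧ ∃ j, n = c + (b * p - q * mub T (q - 1 - b)) + q * j then 1 else 0

lemma lamb_swap_aux (T : Finset (ℕ × ℕ)) (i : ℕ) :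
    lamb (T.image Prod.swap) i = mub T i := by
  rw [lamb, mub]
  rw [Finset.filter_image]
  rw [Finset.sup_image]
  rfl

lemma BTQ_swap (p q : ℕ) (T : Finset (ℕ × ℕ)) :
    BTQ p q T = ATQ q p (T.image Prod.swap) := by
  rw [BTQ, ATQ]
  apply Finset.sum_congr rfl
  intro a _
  rw [lamb_swap_aux]

lemma indB_swap (p q : ℕ) (T : Finset (ℕ × ℕ)) (c n : ℕ) :
    indB p q T c n = indA q p (T.image Prod.swap) c n := by
  rw [indB, indA]
  have h : ∀ b : ℕ, lamb (T.image Prod.swap) (q - 1 - b) = mub T (q - 1 - b) :=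
    fun b => lamb_swap_aux T (q - 1 - b)
  congr 1
  apply propext
  constructor <;> rintro ⟨b, hb, j, hj⟩
  · exact ⟨b, hb, j, by rw [h b]; exact hj⟩
  · exact ⟨b, hb, j, by rw [h b] at hj; exact hj⟩

lemma hT_of_R {p q : ℕ} (hp : 0 < p) (hq : 0 < q)
    (T : Finset (ℕ × ℕ)) (hR : ∀ z ∈ T, p * z.1 + q * z.2 < (p - 1) * (q - 1)) :
    ∀ a, a < p → p * lamb T (p - 1 - a) ≤ a * q := by
  intro a ha
  have hsup : lamb T (p - 1 - a) ≤ a * q / p := by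
    apply Finset.sup_le
    intro z hz
    rw [Finset.mem_filter] at hz
    have h1 := hR z hz.1
    rw [hz.2] at h1
    have h2 : p * (z.1 + 1) ≤ a * q := (cellbound hp hq ha).mp (by omega)
    rw [Nat.le_div_iff_mul_le hp, mul_comm]
    exact h2
  calc p * lamb T (p - 1 - a) ≤ p * (a * q / p) := Nat.mul_le_mul_left p hsup
    _ ≤ a * q := Nat.mul_div_le (a*q) p

open Classical in
noncomputable def TU (p q : ℕ) (H : ℕ → ℚ) (c : ℕ) : Finset (ℕ × ℕ) :=
  (Finset.range q ×ˢ Finset.range p).filter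
    (fun z => p * z.1 + q * z.2 + 1 ≤ (p - 1) * (q - 1) ∧
      0 < H (c + ((p - 1) * (q - 1) - 1 - (p * z.1 + q * z.2))))

lemma TU_mem {p q : ℕ} {H : ℕ → ℚ} {c : ℕ} {z : ℕ × ℕ} :
    z ∈ TU p q H c ↔ z.1 < q ∧ z.2 < p ∧ p * z.1 + q * z.2 + 1 ≤ (p - 1) * (q - 1) ∧
      0 < H (c + ((p - 1) * (q - 1) - 1 - (p * z.1 + q * z.2))) := by
  rw [TU, Finset.mem_filter, Finset.mem_product, Finset.mem_range, Finset.mem_range]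
  tauto

lemma TU_swap (p q : ℕ) (H : ℕ → ℚ) (c : ℕ) :
    (TU q p H c).image Prod.swap = TU p q H c := by
  ext z
  rw [Finset.mem_image]
  constructor
  · rintro ⟨w, hw, rfl⟩
    rw [TU_mem] at hw
    rw [TU_mem]
    refine ⟨hw.2.1, hw.1, ?_, ?_⟩
    · rw [show p * w.swap.1 + q * w.swap.2 = q * w.1 + p * w.2 by simp [Prod.swap]; ring,
        mul_comm (p-1) (q-1)]
      exact hw.2.2.1
    · rw [show p * w.swap.1 + q * w.swap.2 = q * w.1 + p * w.2 by simp [Prod.swap]; ring,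
        mul_comm (p-1) (q-1)]
      exact hw.2.2.2
  · intro hz
    refine ⟨z.swap, ?_, Prod.swap_swap z⟩
    rw [TU_mem] at hz
    rw [TU_mem]
    refine ⟨hz.2.1, hz.1, ?_, ?_⟩
    · rw [show q * z.swap.1 + p * z.swap.2 = p * z.1 + q * z.2 by simp [Prod.swap]; ring,
        mul_comm (q-1) (p-1)]
      exact hz.2.2.1
    · rw [show q * z.swap.1 + p * z.swap.2 = p * z.1 + q * z.2 by simp [Prod.swap]; ring,
        mul_comm (q-1) (p-1)]
      exact hz.2.2.2

lemma construct_A {p q : ℕ} (hp : 0 < p) (hq : 0 < q) (hpq : Nat.Coprime p q)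
    (H : ℕ → ℚ) (hmp : ∀ n, H n ≤ H (n + p)) (hmq : ∀ n, H n ≤ H (n + q))
    (c : ℕ) (hc : 0 < H c) (hcmin : ∀ n, 0 < H n → c ≤ n) :
    IsOrderIdeal (TU p q H c) ∧
    (∀ z ∈ TU p q H c, p * z.1 + q * z.2 < (p - 1) * (q - 1)) ∧
    (∀ n, indA p q (TU p q H c) c n = if 0 < H n then 1 else 0) := by
  classical
  have hstepp : ∀ n s, H n ≤ H (n + p * s) := by
    intro n s
    induction s with
    | zero => simp
    | succ s ih =>
        calc H n ≤ H (n + p * s) := ih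
          _ ≤ H (n + p * s + p) := hmp _
          _ = H (n + p * (s + 1)) := by rw [show n + p*s + p = n + p*(s+1) by ring]
  have hstep : ∀ n s t, H n ≤ H (n + p * s + q * t) := by
    intro n s t
    induction t with
    | zero => simpa using hstepp n s
    | succ t ih =>
        calc H n ≤ H (n + p * s + q * t) := ih
          _ ≤ H (n + p * s + q * t + q) := hmq _
          _ = H (n + p * s + q * (t + 1)) := by
              rw [show n + p*s + q*t + q = n + p*s + q*(t+1) by ring]
  have exA : ∀ a : ℕ, ∃ n, 0 < H (c + n) ∧ n % p = a * q % p := by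
    intro a
    refine ⟨a * q, ?_, rfl⟩
    have h := hstep c 0 a
    rw [show c + p * 0 + q * a = c + a * q by ring] at h
    exact lt_of_lt_of_le hc h
  set mA : ℕ → ℕ := fun a => Nat.find (exA a) with hmA
  have hmA1 : ∀ a, 0 < H (c + mA a) := fun a => (Nat.find_spec (exA a)).1
  have hmA2 : ∀ a, (mA a) % p = a * q % p := fun a => (Nat.find_spec (exA a)).2
  have hmAmin : ∀ a n, 0 < H (c + n) → n % p = a * q % p → mA a ≤ n :=
    fun a n h1 h2 => Nat.find_min' (exA a) ⟨h1, h2⟩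
  have hmAle : ∀ a, mA a ≤ a * q := by
    intro a
    apply hmAmin a (a * q) _ rfl
    have h := hstep c 0 a
    rw [show c + p * 0 + q * a = c + a * q by ring] at h
    exact lt_of_lt_of_le hc h
  have hclassA : ∀ a n, n % p = a * q % p → (0 < H (c + n) ↔ mA a ≤ n) := by
    intro a n hres
    constructor
    · exact fun h => hmAmin a n h hres
    · intro hge
      have hmod : mA a % p = n % p := by rw [hmA2 a, hres]
      have hdvd : p ∣ n - mA a := (Nat.modEq_iff_dvd' hge).mp hmod
      obtain ⟨j, hj⟩ := hdvd
      have h1 := hstep (c + mA a) j 0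
      rw [show c + mA a + p * j + q * 0 = c + (mA a + p * j) by ring] at h1
      have h2 : mA a + p * j = n := by omega
      rw [h2] at h1
      exact lt_of_lt_of_le (hmA1 a) h1
  have hlamb : ∀ a, a < p → p * lamb (TU p q H c) (p - 1 - a) = a * q - mA a := by
    intro a ha
    have hdvd : p ∣ a * q - mA a := (Nat.modEq_iff_dvd' (hmAle a)).mp (hmA2 a)
    set l := (a * q - mA a) / p with hldef
    have hl : p * l = a * q - mA a := Nat.mul_div_cancel' hdvd
    have hmem : ∀ x : ℕ, ((x, p - 1 - a) ∈ TU p q H c) ↔ mA a + p * (x + 1) ≤ a * q := by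
      intro x
      rw [TU_mem]
      constructor
      · rintro ⟨hx, hy, h3, h4⟩
        have h5 : p * (x + 1) ≤ a * q := (cellbound hp hq ha).mp h3
        rw [cellmirror hp hq ha h5] at h4
        have h6 := (hclassA a (a * q - p * (x + 1)) (sub_mul_mod' h5)).mp h4
        omega
      · intro h5'
        have h5 : p * (x + 1) ≤ a * q := by omega
        have hxq : x < q := by
          have h7 : a * q < p * q := by
            have := hmAle a
            calc a * q < (a + 1) * q := by nlinarith
              _ ≤ p * q := Nat.mul_le_mul_right q ha
          have h8 : p * (x + 1) < p * q := lt_of_le_of_lt h5 h7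
          have := Nat.lt_of_mul_lt_mul_left h8
          omega
        refine ⟨hxq, by omega, (cellbound hp hq ha).mpr h5, ?_⟩
        rw [cellmirror hp hq ha h5]
        exact (hclassA a _ (sub_mul_mod' h5)).mpr (by omega)
    have hll : lamb (TU p q H c) (p - 1 - a) = l := by
      apply le_antisymm
      · apply Finset.sup_le
        intro z hz
        rw [Finset.mem_filter] at hz
        have hz2 : z = (z.1, p - 1 - a) := by
          rw [← hz.2]
        have hzm : (z.1, p - 1 - a) ∈ TU p q H c := hz2 ▸ hz.1
        have h6 := (hmem z.1).mp hzm
        have hmle := hmAle a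
        have h9 : p * (z.1 + 1) ≤ p * l := by omega
        exact Nat.le_of_mul_le_mul_left h9 hp
      · rcases Nat.eq_zero_or_pos l with h | h
        · rw [h]; exact Nat.zero_le _
        · have hmem2 : ((l - 1, p - 1 - a)) ∈ TU p q H c := by
            rw [hmem (l - 1), show l - 1 + 1 = l by omega]
            have := hmAle a
            omega
          have hmemf : (l - 1, p - 1 - a) ∈ (TU p q H c).filter (fun z => z.2 = p - 1 - a) :=
            Finset.mem_filter.mpr ⟨hmem2, rfl⟩
          have hle : (l - 1) + 1 ≤ lamb (TU p q H c) (p - 1 - a) :=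
            Finset.le_sup (f := fun z : ℕ × ℕ => z.1 + 1) hmemf
          omega
    rw [hll, hl]
  have heA : ∀ a, a < p → a * q - p * lamb (TU p q H c) (p - 1 - a) = mA a := by
    intro a ha
    rw [hlamb a ha]
    have := hmAle a
    omega
  refine ⟨?_, ?_, ?_⟩
  · -- order ideal
    intro z hz b hb1 hb2
    rw [TU_mem] at hz ⊢
    obtain ⟨d1, hd1⟩ := Nat.le.dest hb1
    obtain ⟨d2, hd2⟩ := Nat.le.dest hb2
    have hsum : p * z.1 + q * z.2 = (p * b.1 + q * b.2) + (p * d1 + q * d2) := by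
      rw [← hd1, ← hd2]; ring
    refine ⟨by omega, by omega, by omega, ?_⟩
    have hcond := hz.2.2.1
    have hidx : c + ((p-1)*(q-1) - 1 - (p * z.1 + q * z.2)) + p * d1 + q * d2
        = c + ((p-1)*(q-1) - 1 - (p * b.1 + q * b.2)) := by
      omega
    have h1 := hstep (c + ((p-1)*(q-1) - 1 - (p * z.1 + q * z.2))) d1 d2
    rw [hidx] at h1
    exact lt_of_lt_of_le hz.2.2.2 h1
  · intro z hz
    rw [TU_mem] at hz
    omega
  · intro n
    by_cases hn : 0 < H n
    · rw [if_pos hn, indA, if_pos]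
      have hcn : c ≤ n := hcmin n hn
      obtain ⟨a, ha, hares⟩ := res_exists hp hpq (n - c)
      have h1 : 0 < H (c + (n - c)) := by rw [show c + (n - c) = n by omega]; exact hn
      have h2 : mA a ≤ n - c := (hclassA a (n - c) hares.symm).mp h1
      have hmod : mA a % p = (n - c) % p := by rw [hmA2 a, hares]
      have hdvd : p ∣ (n - c) - mA a := (Nat.modEq_iff_dvd' h2).mp hmod
      obtain ⟨j, hj⟩ := hdvd
      exact ⟨a, ha, j, by rw [heA a ha]; omega⟩
    · rw [if_neg hn, indA, if_neg]
      rintro ⟨a, ha, j, hj⟩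
      rw [heA a ha] at hj
      have h1 := hstep (c + mA a) j 0
      rw [show c + mA a + p * j + q * 0 = c + mA a + p * j by ring] at h1
      apply hn
      rw [hj]
      exact lt_of_lt_of_le (hmA1 a) h1

lemma main_ind {p q : ℕ} (hp : 0 < p) (hq : 0 < q) (hpq : Nat.Coprime p q) :
    ∀ (r : ℕ) (H : ℕ → ℚ) (D : ℕ),
      (∀ n, 0 ≤ H n) → (∀ n, H n ≤ H (n + p)) → (∀ n, H n ≤ H (n + q)) →
      (∀ n, D ≤ n → H n = H D) →
      ((Finset.image H (Finset.range (D + 1))).filter (fun v => 0 < v)).card ≤ r →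
      ∃ (k : ℕ) (T : Fin k → Finset (ℕ × ℕ)) (γ : Fin k → ℚ) (c : Fin k → ℕ),
        (∀ i, IsOrderIdeal (T i)) ∧
        (∀ i, ∀ z ∈ T i, p * z.1 + q * z.2 < (p - 1) * (q - 1)) ∧
        (∀ i, 0 ≤ γ i) ∧
        (∀ n, H n = ∑ i, γ i * indA p q (T i) (c i) n) ∧
        (∀ n, H n = ∑ i, γ i * indB p q (T i) (c i) n) := by
  intro r
  induction r with
  | zero =>
      intro H D h0 hmp hmq hconst hcard
      have hmemV : ∀ n, H n ∈ Finset.image H (Finset.range (D + 1)) := by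
        intro n
        by_cases hn : n ≤ D
        · exact Finset.mem_image.mpr ⟨n, Finset.mem_range.mpr (by omega), rfl⟩
        · rw [hconst n (by omega)]
          exact Finset.mem_image.mpr ⟨D, Finset.mem_range.mpr (by omega), rfl⟩
      have hz : ∀ n, H n = 0 := by
        intro n
        by_contra hn
        have hpos : 0 < H n := lt_of_le_of_ne (h0 n) (Ne.symm hn)
        have : H n ∈ (Finset.image H (Finset.range (D + 1))).filter (fun v => 0 < v) :=
          Finset.mem_filter.mpr ⟨hmemV n, hpos⟩
        have := Finset.card_pos.mpr ⟨H n, this⟩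
        omega
      exact ⟨0, Fin.elim0, Fin.elim0, Fin.elim0, fun i => i.elim0, fun i => i.elim0,
        fun i => i.elim0, fun n => by simp [hz n], fun n => by simp [hz n]⟩
  | succ r ih =>
      intro H D h0 hmp hmq hconst hcard
      have hmemV : ∀ n, H n ∈ Finset.image H (Finset.range (D + 1)) := by
        intro n
        by_cases hn : n ≤ D
        · exact Finset.mem_image.mpr ⟨n, Finset.mem_range.mpr (by omega), rfl⟩
        · rw [hconst n (by omega)]
          exact Finset.mem_image.mpr ⟨D, Finset.mem_range.mpr (by omega), rfl⟩
      by_cases hz : ∀ n, H n = 0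
      · exact ⟨0, Fin.elim0, Fin.elim0, Fin.elim0, fun i => i.elim0, fun i => i.elim0,
          fun i => i.elim0, fun n => by simp [hz n], fun n => by simp [hz n]⟩
      · push_neg at hz
        obtain ⟨n₀, hn₀⟩ := hz
        have hne : ∃ n, 0 < H n := ⟨n₀, lt_of_le_of_ne (h0 n₀) (Ne.symm hn₀)⟩
        classical
        set c := Nat.find hne with hcdef
        have hc : 0 < H c := Nat.find_spec hne
        have hcmin : ∀ n, 0 < H n → c ≤ n := fun n h => Nat.find_min' hne h
        set P := (Finset.image H (Finset.range (D + 1))).filter (fun v => 0 < v) with hPdef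
        have hPne : P.Nonempty := ⟨H c, Finset.mem_filter.mpr ⟨hmemV c, hc⟩⟩
        set γ0 := P.min' hPne with hγ0def
        have hγ0pos : 0 < γ0 := (Finset.mem_filter.mp (P.min'_mem hPne)).2
        have hγ0le : ∀ n, 0 < H n → γ0 ≤ H n :=
          fun n h => P.min'_le _ (Finset.mem_filter.mpr ⟨hmemV n, h⟩)
        set H₂ : ℕ → ℚ := fun n => if 0 < H n then H n - γ0 else 0 with hH₂
        have h20 : ∀ n, 0 ≤ H₂ n := by
          intro n
          simp only [hH₂]
          split
          · next h => linarith [hγ0le n h]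
          · exact le_refl 0
        have h2mono : ∀ m n : ℕ, H m ≤ H n → 0 < H n → H₂ m ≤ H₂ n := by
          intro m n hmn hn
          simp only [hH₂, if_pos hn]
          split
          · next h => linarith
          · linarith [hγ0le n hn]
        have h2p : ∀ n, H₂ n ≤ H₂ (n + p) := by
          intro n
          by_cases hn : 0 < H (n + p)
          · exact h2mono n (n + p) (hmp n) hn
          · have h1 : H n ≤ H (n + p) := hmp n
            have h2 : H (n + p) = 0 := le_antisymm (not_lt.mp hn) (h0 _)
            have h3 : ¬ 0 < H n := by rw [h2] at h1; intro h4; linarith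
            simp only [hH₂, if_neg hn, if_neg h3]
            exact le_refl 0
        have h2q : ∀ n, H₂ n ≤ H₂ (n + q) := by
          intro n
          by_cases hn : 0 < H (n + q)
          · exact h2mono n (n + q) (hmq n) hn
          · have h1 : H n ≤ H (n + q) := hmq n
            have h2 : H (n + q) = 0 := le_antisymm (not_lt.mp hn) (h0 _)
            have h3 : ¬ 0 < H n := by rw [h2] at h1; intro h4; linarith
            simp only [hH₂, if_neg hn, if_neg h3]
            exact le_refl 0
        have h2const : ∀ n, D ≤ n → H₂ n = H₂ D := by
          intro n hn
          simp only [hH₂]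
          rw [hconst n hn]
        have h2card :
            ((Finset.image H₂ (Finset.range (D + 1))).filter (fun v => 0 < v)).card ≤ r := by
          have hsub : (Finset.image H₂ (Finset.range (D + 1))).filter (fun v => 0 < v) ⊆
              (P.erase γ0).image (fun v => v - γ0) := by
            intro v hv
            rw [Finset.mem_filter, Finset.mem_image] at hv
            obtain ⟨⟨m, hm, hvm⟩, hvpos⟩ := hv
            have hHm : 0 < H m := by
              by_contra h
              rw [← hvm] at hvpos
              simp only [hH₂, if_neg h] at hvpos
              exact lt_irrefl 0 hvpos
            have hveq : v = H m - γ0 := by rw [← hvm]; simp only [hH₂, if_pos hHm]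
            refine Finset.mem_image.mpr ⟨H m, Finset.mem_erase.mpr ⟨?_, ?_⟩, by rw [hveq]⟩
            · intro heq
              rw [heq] at hveq
              rw [hveq] at hvpos
              simp at hvpos
            · exact Finset.mem_filter.mpr ⟨hmemV m, hHm⟩
          calc ((Finset.image H₂ (Finset.range (D + 1))).filter (fun v => 0 < v)).card
              ≤ ((P.erase γ0).image (fun v => v - γ0)).card := Finset.card_le_card hsub
            _ ≤ (P.erase γ0).card := Finset.card_image_le
            _ = P.card - 1 := Finset.card_erase_of_mem (P.min'_mem hPne)
            _ ≤ r := by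
                have h1 : 1 ≤ P.card := Finset.card_pos.mpr hPne
                omega
        obtain ⟨k, T, γ, cc, hOI, hR, hγ, hIA, hIB⟩ := ih H₂ D h20 h2p h2q h2const h2card
        have hcA := construct_A hp hq hpq H hmp hmq c hc hcmin
        have hcB := construct_A hq hp hpq.symm H hmq hmp c hc hcmin
        have hindB0 : ∀ n, indB p q (TU p q H c) c n = if 0 < H n then 1 else 0 := by
          intro n
          rw [indB_swap, TU_swap q p H c]
          exact hcB.2.2 n
        refine ⟨k + 1, Fin.cons (TU p q H c) T, Fin.cons γ0 γ, Fin.cons c cc,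
          ?_, ?_, ?_, ?_, ?_⟩
        · intro i
          refine Fin.cases ?_ (fun j => ?_) i
          · simpa using hcA.1
          · simpa using hOI j
        · intro i
          refine Fin.cases ?_ (fun j => ?_) i
          · simpa using hcA.2.1
          · simpa using hR j
        · intro i
          refine Fin.cases ?_ (fun j => ?_) i
          · simpa using hγ0pos.le
          · simpa using hγ j
        · intro n
          rw [Fin.sum_univ_succ]
          simp only [Fin.cons_zero, Fin.cons_succ]
          rw [← hIA n, hcA.2.2 n]
          by_cases hn : 0 < H n
          · rw [if_pos hn]
            simp only [hH₂, if_pos hn]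
            ring
          · rw [if_neg hn]
            have h2 : H n = 0 := le_antisymm (not_lt.mp hn) (h0 n)
            simp only [hH₂, if_neg hn]
            rw [h2]
            ring
        · intro n
          rw [Fin.sum_univ_succ]
          simp only [Fin.cons_zero, Fin.cons_succ]
          rw [← hIB n, hindB0 n]
          by_cases hn : 0 < H n
          · rw [if_pos hn]
            simp only [hH₂, if_pos hn]
            ring
          · rw [if_neg hn]
            have h2 : H n = 0 := le_antisymm (not_lt.mp hn) (h0 n)
            simp only [hH₂, if_neg hn]
            rw [h2]
            ring

theorem stmt9_aux (p q : ℕ) (hp : 0 < p) (hq : 0 < q) (hpq : Nat.Coprime p q)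
    (A B : Polynomial ℚ)
    (hA : ∀ n, 0 ≤ A.coeff n) (hB : ∀ n, 0 ≤ B.coeff n)
    (h : A * xiQ q = B * xiQ p) :
    ∃ (k : ℕ) (T : Fin k → Finset (ℕ × ℕ)) (γ : Fin k → ℚ) (c : Fin k → ℕ),
      (∀ i, IsOrderIdeal (T i)) ∧
      (∀ i, ∀ z ∈ T i, p * z.1 + q * z.2 < (p - 1) * (q - 1)) ∧
      (∀ i, 0 ≤ γ i) ∧
      A = ∑ i, C (γ i) * X ^ (c i) * ATQ p q (T i) ∧
      B = ∑ i, C (γ i) * X ^ (c i) * BTQ p q (T i) := by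
  classical
  have hxp : xiQ p ≠ 0 := xiQ_ne_zero hp
  have hco : IsCoprime (xiQ p) (xiQ q) := xiQ_coprime hp hq hpq
  have hdvd : xiQ p ∣ A := by
    apply hco.dvd_of_dvd_mul_right
    exact ⟨B, by rw [h]; ring⟩
  obtain ⟨F, hF⟩ := hdvd
  have hBF : B = F * xiQ q := by
    have h2 : B * xiQ p = (F * xiQ q) * xiQ p := by
      rw [← h, hF]; ring
    exact mul_right_cancel₀ hxp h2
  have hAF : A = F * xiQ p := by rw [hF]; ring
  set H : ℕ → ℚ := fun n => ∑ k ∈ Finset.range (n + 1), F.coeff k with hH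
  set D := F.natDegree with hD
  have hAc : ∀ m, A.coeff m = H m - if p ≤ m then H (m - p) else 0 := by
    intro m
    rw [hAF, coeff_mul_xiQ]
  have hBc : ∀ m, B.coeff m = H m - if q ≤ m then H (m - q) else 0 := by
    intro m
    rw [hBF, coeff_mul_xiQ]
  have h0 : ∀ n, 0 ≤ H n := by
    intro n
    induction n using Nat.strong_induction_on with
    | _ n ihn =>
      have h1 := hAc n
      have h2 := hA n
      by_cases hpn : p ≤ n
      · rw [if_pos hpn] at h1
        have h3 := ihn (n - p) (by omega)
        linarith
      · rw [if_neg hpn] at h1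
        linarith
  have hmp : ∀ n, H n ≤ H (n + p) := by
    intro n
    have h1 := hAc (n + p)
    rw [if_pos (by omega : p ≤ n + p), Nat.add_sub_cancel] at h1
    have h2 := hA (n + p)
    linarith
  have hmq : ∀ n, H n ≤ H (n + q) := by
    intro n
    have h1 := hBc (n + q)
    rw [if_pos (by omega : q ≤ n + q), Nat.add_sub_cancel] at h1
    have h2 := hB (n + q)
    linarith
  have hconst : ∀ n, D ≤ n → H n = H D := by
    intro n hn
    simp only [hH]
    rw [← Finset.sum_subset (Finset.range_subset_range.mpr (by omega : D + 1 ≤ n + 1))]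
    intro x hx hnx
    apply Polynomial.coeff_eq_zero_of_natDegree_lt
    rw [Finset.mem_range] at hnx
    omega
  obtain ⟨k, T, γ, cc, hOI, hR, hγ, hIA, hIB⟩ :=
    main_ind hp hq hpq
      ((Finset.image H (Finset.range (D + 1))).filter (fun v => 0 < v)).card
      H D h0 hmp hmq hconst (le_refl _)
  refine ⟨k, T, γ, cc, hOI, hR, hγ, ?_, ?_⟩
  · apply Polynomial.ext
    intro m
    rw [Polynomial.finset_sum_coeff]
    have key : A.coeff m = ∑ i, γ i * (indA p q (T i) (cc i) m -
        if p ≤ m then indA p q (T i) (cc i) (m - p) else 0) := by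
      rw [hAc m, hIA m]
      by_cases hpm : p ≤ m
      · rw [if_pos hpm, hIA (m - p), ← Finset.sum_sub_distrib]
        apply Finset.sum_congr rfl
        intro i _
        rw [if_pos hpm]
        ring
      · rw [if_neg hpm]
        simp only [if_neg hpm]
        simp
    rw [key]
    apply Finset.sum_congr rfl
    intro i _
    rw [mul_assoc, Polynomial.coeff_C_mul,
      coeff_shift_ATQ hp hpq (T i) (hT_of_R hp hq (T i) (hR i)) (cc i) m]
  · apply Polynomial.ext
    intro m
    rw [Polynomial.finset_sum_coeff]
    have hswapR : ∀ i : Fin k, ∀ z ∈ (T i).image Prod.swap,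
        q * z.1 + p * z.2 < (q - 1) * (p - 1) := by
      intro i z hz
      rw [Finset.mem_image] at hz
      obtain ⟨w, hw, rfl⟩ := hz
      have := hR i w hw
      rw [show q * w.swap.1 + p * w.swap.2 = p * w.1 + q * w.2 by simp [Prod.swap]; ring,
        mul_comm (q-1) (p-1)]
      exact this
    have hcoeffB : ∀ i : Fin k, ∀ m' : ℕ,
        (X ^ (cc i) * BTQ p q (T i)).coeff m' =
          indB p q (T i) (cc i) m' -
            if q ≤ m' then indB p q (T i) (cc i) (m' - q) else 0 := by
      intro i m'
      rw [BTQ_swap]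
      rw [indB_swap, indB_swap]
      exact coeff_shift_ATQ hq hpq.symm ((T i).image Prod.swap)
        (hT_of_R hq hp _ (hswapR i)) (cc i) m'
    have key : B.coeff m = ∑ i, γ i * (indB p q (T i) (cc i) m -
        if q ≤ m then indB p q (T i) (cc i) (m - q) else 0) := by
      rw [hBc m, hIB m]
      by_cases hqm : q ≤ m
      · rw [if_pos hqm, hIB (m - q), ← Finset.sum_sub_distrib]
        apply Finset.sum_congr rfl
        intro i _
        rw [if_pos hqm]
        ring
      · rw [if_neg hqm]
        simp only [if_neg hqm]
        simp
    rw [key]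
    apply Finset.sum_congr rfl
    intro i _
    rw [mul_assoc, Polynomial.coeff_C_mul, hcoeffB i m]

/-- Every pair of nonnegative solutions of A·ξ_q = B·ξ_p is a nonnegative
    combination of shifted pairs (A_T, B_T) for order ideals T in R(p,q). -/
theorem stmt9 (p q : ℕ) (hp : 0 < p) (hq : 0 < q) (hpq : Nat.Coprime p q)
    (A B : Polynomial ℚ)
    (hA : ∀ n, 0 ≤ A.coeff n) (hB : ∀ n, 0 ≤ B.coeff n)
    (h : A * xiQ q = B * xiQ p) :
    ∃ (k : ℕ) (T : Fin k → Finset (ℕ × ℕ)) (γ : Fin k → ℚ) (c : Fin k → ℕ),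
      (∀ i, IsOrderIdeal (T i)) ∧
      (∀ i, ∀ z ∈ T i, p * z.1 + q * z.2 < (p - 1) * (q - 1)) ∧
      (∀ i, 0 ≤ γ i) ∧
      A = ∑ i, C (γ i) * X ^ (c i) * ATQ p q (T i) ∧
      B = ∑ i, C (γ i) * X ^ (c i) * BTQ p q (T i) := by
  exact stmt9_aux p q hp hq hpq A B hA hB h
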